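/- arXiv:1509.06866 — 4 statements merged into one kernel-verified Lean document; each statement's English description precedes it below -/
import Mathlib

section
/- For a real random variable Y with E|Y| < ∞ and τ ∈ (0,1), the function x ↦ E[I_τ(x,Y)] where I_τ(x,y) = τ(y−x)1_{y≥x} − (1−τ)(x−y)1_{y<x} is strictly decreasing, continuous, and has exactly one zero. -/
open MeasureTheory Filter Set Asymptotics

noncomputable def ident (τ x y : ℝ) : ℝ :=
  if x ≤ y then τ * (y - x) else -((1 - τ) * (x - y))

noncomputable def score (τ x y : ℝ) : ℝ :=
  τ / 2 * ((max (y - x) 0) ^ 2 - (max y 0) ^ 2) +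
    (1 - τ) / 2 * ((max (x - y) 0) ^ 2 - (max (-y) 0) ^ 2)

lemma ident_eq_max (τ x y : ℝ) :
    ident τ x y = τ * max (y - x) 0 - (1 - τ) * max (x - y) 0 := by
  unfold ident
  rcases le_or_gt x y with h | h
  · rw [if_pos h, max_eq_left (by linarith), max_eq_right (by linarith)]; ring
  · rw [if_neg (not_le.mpr h), max_eq_right (by linarith), max_eq_left (by linarith)]; ring

lemma ident_integrable {Ω : Type*} [MeasurableSpace Ω] {P : Measure Ω} [IsFiniteMeasure P]
    {Y : Ω → ℝ} (hY : Integrable Y P) (τ x : ℝ) :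
    Integrable (fun ω => ident τ x (Y ω)) P := by
  simp only [ident_eq_max]
  exact (((hY.sub (integrable_const x)).pos_part).const_mul τ).sub
    ((((integrable_const x).sub hY).pos_part).const_mul (1 - τ))

lemma ident_lip {τ : ℝ} (h0 : 0 < τ) (h1 : τ < 1) (x1 x2 y : ℝ) :
    |ident τ x1 y - ident τ x2 y| ≤ |x1 - x2| := by
  unfold ident
  rcases le_total x1 x2 with h | h
  · rw [show |x1 - x2| = x2 - x1 by rw [abs_sub_comm]; exact abs_of_nonneg (by linarith),
      abs_le]
    constructor <;> split_ifs <;> nlinarith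
  · rw [show |x1 - x2| = x1 - x2 from abs_of_nonneg (by linarith), abs_le]
    constructor <;> split_ifs <;> nlinarith

lemma ident_anti {τ : ℝ} (h0 : 0 < τ) (h1 : τ < 1) {x1 x2 : ℝ} (h : x1 ≤ x2) (y : ℝ) :
    ident τ x2 y + min τ (1 - τ) * (x2 - x1) ≤ ident τ x1 y := by
  unfold ident
  rcases le_total τ (1 - τ) with hm | hm
  · rw [min_eq_left hm]
    split_ifs with hA hB hB <;> nlinarith
  · rw [min_eq_right hm]
    split_ifs with hA hB hB <;> nlinarith

lemma ident_lb {τ : ℝ} (h0 : 0 < τ) (h1 : τ < 1) {x : ℝ} (hx : x ≤ 0) (y : ℝ) :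
    τ * (y - x) - |y| ≤ ident τ x y := by
  rw [ident_eq_max]
  have h2 : max (x - y) 0 ≤ |y| :=
    max_le (by linarith [le_abs_self (-y), abs_neg y]) (abs_nonneg y)
  have h3 : y - x ≤ max (y - x) 0 := le_max_left _ _
  nlinarith [abs_nonneg y, le_max_right (y - x) (0:ℝ)]

lemma ident_ub {τ : ℝ} (h0 : 0 < τ) (h1 : τ < 1) {x : ℝ} (hx : 0 ≤ x) (y : ℝ) :
    ident τ x y ≤ τ * |y| + (1 - τ) * (y - x) := by
  rw [ident_eq_max]
  have h2 : max (y - x) 0 ≤ |y| := max_le (by linarith [le_abs_self y]) (abs_nonneg y)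
  have h3 : x - y ≤ max (x - y) 0 := le_max_left _ _
  nlinarith

theorem expectile_ident_strictAnti_continuous_uniqueZero
    {Ω : Type*} [MeasurableSpace Ω] (P : Measure Ω) [IsProbabilityMeasure P]
    (Y : Ω → ℝ) (hY : Integrable Y P) (τ : ℝ) (hτ : τ ∈ Set.Ioo (0:ℝ) 1) :
    StrictAnti (fun x : ℝ => ∫ ω, ident τ x (Y ω) ∂P) ∧
    Continuous (fun x : ℝ => ∫ ω, ident τ x (Y ω) ∂P) ∧
    ∃! x : ℝ, ∫ ω, ident τ x (Y ω) ∂P = 0 := by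
  obtain ⟨h0, h1⟩ := hτ
  set F : ℝ → ℝ := fun x => ∫ ω, ident τ x (Y ω) ∂P with hF
  have hint : ∀ x, Integrable (fun ω => ident τ x (Y ω)) P := fun x => ident_integrable hY τ x
  have hc : 0 < min τ (1 - τ) := lt_min h0 (by linarith)
  have hanti : StrictAnti F := by
    intro x1 x2 h
    have hic : Integrable (fun ω => ident τ x2 (Y ω) + min τ (1 - τ) * (x2 - x1)) P :=
      (hint x2).add (integrable_const _)
    have h2 : ∫ ω, (ident τ x2 (Y ω) + min τ (1 - τ) * (x2 - x1)) ∂P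
        ≤ ∫ ω, ident τ x1 (Y ω) ∂P :=
      integral_mono hic (hint x1) (fun ω => ident_anti h0 h1 h.le (Y ω))
    rw [integral_add (hint x2) (integrable_const _), integral_const, probReal_univ,
      one_smul] at h2
    have := mul_pos hc (sub_pos.mpr h)
    show F x2 < F x1
    linarith [h2]
  have hlip : LipschitzWith 1 F := by
    apply LipschitzWith.of_dist_le_mul
    intro x1 x2
    rw [Real.dist_eq, Real.dist_eq, NNReal.coe_one, one_mul]
    have h1' : F x1 - F x2 = ∫ ω, (ident τ x1 (Y ω) - ident τ x2 (Y ω)) ∂P :=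
      (integral_sub (hint x1) (hint x2)).symm
    rw [h1']
    calc |∫ ω, (ident τ x1 (Y ω) - ident τ x2 (Y ω)) ∂P|
        ≤ ∫ ω, |ident τ x1 (Y ω) - ident τ x2 (Y ω)| ∂P := by
          simpa [Real.norm_eq_abs] using
            norm_integral_le_integral_norm (μ := P)
              (f := fun ω => ident τ x1 (Y ω) - ident τ x2 (Y ω))
      _ ≤ ∫ _ω, |x1 - x2| ∂P := integral_mono ((hint x1).sub (hint x2)).abs
          (integrable_const _) (fun ω => ident_lip h0 h1 x1 x2 (Y ω))
      _ = |x1 - x2| := by simp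
  refine ⟨hanti, hlip.continuous, ?_⟩
  set A : ℝ := τ * (∫ ω, Y ω ∂P) - ∫ ω, |Y ω| ∂P with hA
  set B : ℝ := τ * (∫ ω, |Y ω| ∂P) + (1 - τ) * (∫ ω, Y ω ∂P) with hB
  set a : ℝ := min 0 (A / τ) - 1 with ha
  set b : ℝ := max 0 (B / (1 - τ)) + 1 with hb
  have hax : a ≤ 0 := by
    have := min_le_left 0 (A / τ); simp only [ha]; linarith
  have hbx : 0 ≤ b := by
    have := le_max_left 0 (B / (1 - τ)); simp only [hb]; linarith
  have hab : a < b := by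
    have := min_le_left 0 (A / τ)
    have h5 : a < 0 := by simp only [ha]; linarith
    linarith
  have hFa : 0 < F a := by
    have i1 : Integrable (fun ω => τ * (Y ω - a)) P := (hY.sub (integrable_const a)).const_mul τ
    have i2 : Integrable (fun ω => τ * (Y ω - a) - |Y ω|) P := i1.sub hY.abs
    have h2 : ∫ ω, (τ * (Y ω - a) - |Y ω|) ∂P ≤ ∫ ω, ident τ a (Y ω) ∂P :=
      integral_mono i2 (hint a) (fun ω => ident_lb h0 h1 hax (Y ω))
    rw [integral_sub i1 hY.abs] at h2
    have h3 : (∫ ω, τ * (Y ω - a) ∂P) = τ * ((∫ ω, Y ω ∂P) - a) := by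
      rw [integral_const_mul, integral_sub hY (integrable_const a), integral_const, probReal_univ,
        one_smul]
    rw [h3] at h2
    have haA : τ * a < A := by
      have h4 : a < A / τ := by
        have := min_le_right 0 (A / τ); simp only [ha]; linarith
      calc τ * a < τ * (A / τ) := (mul_lt_mul_iff_right₀ h0).mpr h4
        _ = A := by field_simp
    simp only [hA] at haA
    show 0 < F a
    have : F a = ∫ ω, ident τ a (Y ω) ∂P := rfl
    rw [this]
    nlinarith [h2]
  have hFb : F b < 0 := by
    have i1 : Integrable (fun ω => τ * |Y ω|) P := hY.abs.const_mul τ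
    have i2 : Integrable (fun ω => (1 - τ) * (Y ω - b)) P :=
      (hY.sub (integrable_const b)).const_mul (1 - τ)
    have h2 : ∫ ω, ident τ b (Y ω) ∂P ≤ ∫ ω, (τ * |Y ω| + (1 - τ) * (Y ω - b)) ∂P :=
      integral_mono (hint b) (i1.add i2) (fun ω => ident_ub h0 h1 hbx (Y ω))
    rw [integral_add i1 i2, integral_const_mul, integral_const_mul,
      integral_sub hY (integrable_const b), integral_const, probReal_univ,
      one_smul] at h2
    have hbB : B < (1 - τ) * b := by
      have h4 : B / (1 - τ) < b := by
        have := le_max_right 0 (B / (1 - τ)); simp only [hb]; linarith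
      have h1τ : (0:ℝ) < 1 - τ := by linarith
      calc B = (1 - τ) * (B / (1 - τ)) := by field_simp
        _ < (1 - τ) * b := (mul_lt_mul_iff_right₀ h1τ).mpr h4
    simp only [hB] at hbB
    show F b < 0
    have : F b = ∫ ω, ident τ b (Y ω) ∂P := rfl
    rw [this]
    nlinarith [h2]
  have hcont : ContinuousOn F (Icc a b) := hlip.continuous.continuousOn
  have h0mem : (0:ℝ) ∈ Icc (F b) (F a) := ⟨hFb.le, hFa.le⟩
  obtain ⟨x, _, hx⟩ := intermediate_value_Icc' hab.le hcont h0mem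
  exact ⟨x, hx, fun y hy => hanti.injective (hy.trans hx.symm)⟩
end

section
/- For a random variable Y with E|Y| < ∞, the map τ ↦ μ_τ(Y) from (0,1) to ℝ, where μ_τ(Y) is the unique solution of E[I_τ(x,Y)] = 0, is strictly increasing whenever Y is non-degenerate. -/
open MeasureTheory Filter Set Asymptotics

lemma ident_eq (τ x y : ℝ) : ident τ x y = τ * |y - x| - max (x - y) 0 := by
  unfold ident
  split_ifs with h
  · rw [abs_of_nonneg (by linarith), max_eq_right (by linarith)]; ring
  · rw [abs_of_neg (by linarith), max_eq_left (by linarith)]; ring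

lemma ident_mono (τ : ℝ) (h0 : 0 ≤ τ) (h1 : τ ≤ 1) {x x' : ℝ} (h : x' ≤ x) (y : ℝ) :
    ident τ x y ≤ ident τ x' y := by
  unfold ident
  split_ifs with h1' h2' h2' <;> nlinarith

theorem expectile_strictMono_in_tau
    {Ω : Type*} [MeasurableSpace Ω] (P : Measure Ω) [IsProbabilityMeasure P]
    (Y : Ω → ℝ) (hY : Integrable Y P)
    (hnd : ¬ ∃ c : ℝ, ∀ᵐ ω ∂P, Y ω = c)
    (τ₁ τ₂ : ℝ) (hτ₁ : τ₁ ∈ Set.Ioo (0:ℝ) 1) (hτ₂ : τ₂ ∈ Set.Ioo (0:ℝ) 1)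
    (hlt : τ₁ < τ₂) (μ₁ μ₂ : ℝ)
    (hμ₁ : ∫ ω, ident τ₁ μ₁ (Y ω) ∂P = 0)
    (hμ₂ : ∫ ω, ident τ₂ μ₂ (Y ω) ∂P = 0) :
    μ₁ < μ₂ := by
  have hA : ∀ x : ℝ, Integrable (fun ω => |Y ω - x|) P :=
    fun x => (hY.sub (integrable_const x)).abs
  have hB : ∀ x : ℝ, Integrable (fun ω => max (x - Y ω) 0) P :=
    fun x => ((integrable_const x).sub hY).pos_part
  have hIdent : ∀ τ x : ℝ, Integrable (fun ω => ident τ x (Y ω)) P := by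
    intro τ x
    simp only [ident_eq]
    exact ((hA x).const_mul τ).sub (hB x)
  have hint : ∀ τ x : ℝ, ∫ ω, ident τ x (Y ω) ∂P
      = τ * ∫ ω, |Y ω - x| ∂P - ∫ ω, max (x - Y ω) 0 ∂P := by
    intro τ x
    simp only [ident_eq]
    rw [integral_sub ((hA x).const_mul τ) (hB x), integral_const_mul]
  have hA1 : 0 < ∫ ω, |Y ω - μ₁| ∂P := by
    rcases lt_or_eq_of_le (integral_nonneg (fun ω => abs_nonneg (Y ω - μ₁)) : (0:ℝ) ≤ ∫ ω, |Y ω - μ₁| ∂P) with h | h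
    · exact h
    · exfalso
      apply hnd
      refine ⟨μ₁, ?_⟩
      have := (integral_eq_zero_iff_of_nonneg (fun ω => abs_nonneg (Y ω - μ₁)) (hA μ₁)).1 h.symm
      filter_upwards [this] with ω hω
      have : |Y ω - μ₁| = 0 := hω
      have := abs_eq_zero.1 this
      linarith
  by_contra hle
  push_neg at hle
  have hmono : ∫ ω, ident τ₂ μ₁ (Y ω) ∂P ≤ ∫ ω, ident τ₂ μ₂ (Y ω) ∂P :=
    integral_mono (hIdent τ₂ μ₁) (hIdent τ₂ μ₂)
      (fun ω => ident_mono τ₂ hτ₂.1.le hτ₂.2.le hle (Y ω))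
  rw [hμ₂, hint τ₂ μ₁] at hmono
  rw [hint τ₁ μ₁] at hμ₁
  nlinarith
end

section
/- If P(Y > y) = (c⁺ + o(1)) y^{−α} L(y) and P(Y < −y) = (c⁻ + o(1)) y^{−α} L(y) as y → ∞ for slowly varying L, α ∈ (1,2), and c⁺ + c⁻ > 0, then for τ ∈ (0,1): P(I_τ(μ_τ,Y) > y) = τ^α (c⁺ + o(1)) y^{−α} L(y) and P(I_τ(μ_τ,Y) < −y) = (1−τ)^α (c⁻ + o(1)) y^{−α} L(y) as y → ∞. -/
open MeasureTheory Filter Set Asymptotics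

/-- If `F y / (y^(-α) L y) → c` and `L` is slowly varying, then for fixed `l > 0`,
`F (l y) / (y^(-α) L y) → c · l^(-α)`. -/
lemma tail_scaled (F : ℝ → ℝ) (α c : ℝ) (L : ℝ → ℝ)
    (hLpos : ∀ y > 0, 0 < L y)
    (hslow : ∀ l > 0, Tendsto (fun y => L (l * y) / L y) atTop (nhds 1))
    (htail : Tendsto (fun y => F y / (y ^ (-α) * L y)) atTop (nhds c))
    (l : ℝ) (hl : 0 < l) :
    Tendsto (fun y => F (l * y) / (y ^ (-α) * L y)) atTop (nhds (c * l ^ (-α))) := by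
  have hcomp : Tendsto (fun y : ℝ => l * y) atTop atTop :=
    tendsto_id.const_mul_atTop hl
  have h1 : Tendsto (fun y => F (l * y) / ((l * y) ^ (-α) * L (l * y))) atTop (nhds c) :=
    htail.comp hcomp
  have key : ∀ᶠ y in atTop,
      (F (l * y) / ((l * y) ^ (-α) * L (l * y))) * (l ^ (-α) * (L (l * y) / L y))
        = F (l * y) / (y ^ (-α) * L y) := by
    filter_upwards [eventually_gt_atTop (0:ℝ)] with y hy
    have hly : (0:ℝ) < l * y := mul_pos hl hy
    have hL1 : L (l * y) ≠ 0 := (hLpos _ hly).ne'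
    have hL2 : L y ≠ 0 := (hLpos _ hy).ne'
    have hr1 : (l * y) ^ (-α) ≠ 0 := (Real.rpow_pos_of_pos hly _).ne'
    have hr2 : y ^ (-α) ≠ 0 := (Real.rpow_pos_of_pos hy _).ne'
    have hr3 : l ^ (-α) ≠ 0 := (Real.rpow_pos_of_pos hl _).ne'
    rw [Real.mul_rpow hl.le hy.le]
    field_simp
  have hmul : Tendsto
      (fun y => (F (l * y) / ((l * y) ^ (-α) * L (l * y))) * (l ^ (-α) * (L (l * y) / L y)))
      atTop (nhds (c * (l ^ (-α) * 1))) :=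
    h1.mul (tendsto_const_nhds.mul (hslow l hl))
  rw [mul_one] at hmul
  exact Tendsto.congr' key hmul

/-- Sandwich lemma: for an antitone `F`, scaled limits transfer to affine arguments. -/
lemma tail_shift (F g : ℝ → ℝ) (hF : Antitone F) (α c : ℝ)
    (hg : ∀ᶠ y in atTop, 0 < g y)
    (H : ∀ l : ℝ, 0 < l → Tendsto (fun y => F (l * y) / g y) atTop (nhds (c * l ^ (-α))))
    (a b : ℝ) (ha : 0 < a) :
    Tendsto (fun y => F (a * y + b) / g y) atTop (nhds (c * a ^ (-α))) := by
  rw [Metric.tendsto_nhds]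
  intro ε hε
  have hcont : ContinuousAt (fun t : ℝ => c * t ^ (-α)) a := by
    exact (Real.continuousAt_rpow_const a (-α) (Or.inl ha.ne')).const_mul c
  rw [Metric.continuousAt_iff] at hcont
  obtain ⟨δ, hδ0, hδ⟩ := hcont (ε / 2) (by positivity)
  set δ' := min (δ / 2) (a / 2) with hδ'def
  have hδ'0 : 0 < δ' := lt_min (by positivity) (by positivity)
  have hδ'δ : δ' < δ := lt_of_le_of_lt (min_le_left _ _) (by linarith)
  have hsub : 0 < a - δ' := by
    have : δ' ≤ a / 2 := min_le_right _ _
    linarith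
  have hd1 : dist (a + δ') a < δ := by
    rw [Real.dist_eq, show a + δ' - a = δ' by ring, abs_of_pos hδ'0]
    exact hδ'δ
  have hd2 : dist (a - δ') a < δ := by
    rw [Real.dist_eq, show a - δ' - a = -δ' by ring, abs_neg, abs_of_pos hδ'0]
    exact hδ'δ
  have hb1 := hδ hd1
  have hb2 := hδ hd2
  have Hp := (Metric.tendsto_nhds.mp (H (a + δ') (by linarith))) (ε / 2) (by positivity)
  have Hm := (Metric.tendsto_nhds.mp (H (a - δ') hsub)) (ε / 2) (by positivity)
  filter_upwards [Hp, Hm, hg, eventually_ge_atTop (|b| / δ')] with y h1 h2 h3 h4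
  have hy0 : 0 ≤ y := le_trans (by positivity) h4
  have hby : |b| ≤ δ' * y := by
    rw [div_le_iff₀ hδ'0] at h4
    linarith [h4]
  have habs1 : b ≤ δ' * y := le_trans (le_abs_self b) hby
  have habs2 : -(δ' * y) ≤ b := by
    have := neg_abs_le b
    linarith
  have hle1 : a * y + b ≤ (a + δ') * y := by nlinarith
  have hle2 : (a - δ') * y ≤ a * y + b := by nlinarith
  have e1 : F (a * y + b) / g y ≤ F ((a - δ') * y) / g y :=
    div_le_div_of_nonneg_right (hF hle2) h3.le
  have e2 : F ((a + δ') * y) / g y ≤ F (a * y + b) / g y :=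
    div_le_div_of_nonneg_right (hF hle1) h3.le
  rw [Real.dist_eq, abs_lt] at h1 h2 hb1 hb2 ⊢
  constructor <;> [linarith [h1.1, hb1.1, hb1.2]; linarith [h2.2, hb2.1, hb2.2]]

lemma ident_gt_iff {τ μ z y : ℝ} (hτ0 : 0 < τ) (hτ1 : τ < 1) (hy : 0 < y) :
    y < ident τ μ z ↔ 1 / τ * y + μ < z := by
  unfold ident
  split_ifs with h
  · rw [show (1 / τ * y + μ < z) ↔ (1 / τ * y < z - μ) by constructor <;> intro <;> linarith,
      one_div, inv_mul_lt_iff₀ hτ0]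
  · push_neg at h
    constructor
    · intro hlt
      exfalso
      have h1 : 0 ≤ (1 - τ) * (μ - z) := mul_nonneg (by linarith) (by linarith)
      linarith
    · intro hlt
      exfalso
      have h1 : 0 < 1 / τ * y := by positivity
      linarith

lemma ident_lt_iff {τ μ z y : ℝ} (hτ0 : 0 < τ) (hτ1 : τ < 1) (hy : 0 < y) :
    ident τ μ z < -y ↔ z < -(1 / (1 - τ) * y + -μ) := by
  have h1τ : 0 < 1 - τ := by linarith
  unfold ident
  split_ifs with h
  · constructor
    · intro hlt
      exfalso
      have : 0 ≤ τ * (z - μ) := mul_nonneg hτ0.le (by linarith)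
      linarith
    · intro hlt
      exfalso
      have : 0 < 1 / (1 - τ) * y := by positivity
      linarith
  · push_neg at h
    rw [show (z < -(1 / (1 - τ) * y + -μ)) ↔ (1 / (1 - τ) * y < μ - z) by
        constructor <;> intro <;> linarith,
      one_div, inv_mul_lt_iff₀ h1τ]
    constructor <;> intro <;> linarith

theorem ident_tails_regularly_varying
    {Ω : Type*} [MeasurableSpace Ω] (P : Measure Ω) [IsProbabilityMeasure P]
    (Y : Ω → ℝ) (hY : Integrable Y P)
    (τ : ℝ) (hτ : τ ∈ Set.Ioo (0:ℝ) 1)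
    (μ : ℝ) (hμ : ∫ ω, ident τ μ (Y ω) ∂P = 0)
    (α : ℝ) (hα : α ∈ Set.Ioo (1:ℝ) 2)
    (cp cm : ℝ) (hcp : 0 ≤ cp) (hcm : 0 ≤ cm) (hcsum : 0 < cp + cm)
    (L : ℝ → ℝ) (hLpos : ∀ y > 0, 0 < L y)
    (hslow : ∀ l > 0, Tendsto (fun y => L (l * y) / L y) atTop (nhds 1))
    (htailp : Tendsto (fun y => (P {ω | y < Y ω}).toReal / (y ^ (-α) * L y))
      atTop (nhds cp))
    (htailm : Tendsto (fun y => (P {ω | Y ω < -y}).toReal / (y ^ (-α) * L y))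
      atTop (nhds cm)) :
    Tendsto (fun y => (P {ω | y < ident τ μ (Y ω)}).toReal / (y ^ (-α) * L y))
      atTop (nhds (τ ^ α * cp)) ∧
    Tendsto (fun y => (P {ω | ident τ μ (Y ω) < -y}).toReal / (y ^ (-α) * L y))
      atTop (nhds ((1 - τ) ^ α * cm)) := by
  obtain ⟨hτ0, hτ1⟩ := hτ
  have h1τ : 0 < 1 - τ := by linarith
  set g : ℝ → ℝ := fun y => y ^ (-α) * L y with hg_def
  have hg : ∀ᶠ y in atTop, 0 < g y := by
    filter_upwards [eventually_gt_atTop (0:ℝ)] with y hy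
    exact mul_pos (Real.rpow_pos_of_pos hy _) (hLpos _ hy)
  -- positive tail
  set F : ℝ → ℝ := fun t => (P {ω | t < Y ω}).toReal with hF_def
  have hFanti : Antitone F := by
    intro s t hst
    exact ENNReal.toReal_mono (measure_ne_top P _)
      (measure_mono fun ω (hω : t < Y ω) => lt_of_le_of_lt hst hω)
  have HFp : ∀ l : ℝ, 0 < l →
      Tendsto (fun y => F (l * y) / g y) atTop (nhds (cp * l ^ (-α))) :=
    fun l hl => tail_scaled F α cp L hLpos hslow htailp l hl
  have hshiftp := tail_shift F g hFanti α cp hg HFp (1/τ) μ (by positivity)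
  have hconstp : cp * (1/τ) ^ (-α) = τ ^ α * cp := by
    rw [one_div, Real.inv_rpow hτ0.le, Real.rpow_neg hτ0.le, inv_inv, mul_comm]
  rw [hconstp] at hshiftp
  -- negative tail
  set G : ℝ → ℝ := fun t => (P {ω | Y ω < -t}).toReal with hG_def
  have hGanti : Antitone G := by
    intro s t hst
    exact ENNReal.toReal_mono (measure_ne_top P _)
      (measure_mono fun ω (hω : Y ω < -t) => lt_of_lt_of_le hω (by linarith))
  have htailm' : Tendsto (fun y => G y / (y ^ (-α) * L y)) atTop (nhds cm) := htailm
  have HGm : ∀ l : ℝ, 0 < l →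
      Tendsto (fun y => G (l * y) / g y) atTop (nhds (cm * l ^ (-α))) :=
    fun l hl => tail_scaled G α cm L hLpos hslow htailm' l hl
  have hshiftm := tail_shift G g hGanti α cm hg HGm (1/(1-τ)) (-μ) (by positivity)
  have hconstm : cm * (1/(1-τ)) ^ (-α) = (1 - τ) ^ α * cm := by
    rw [one_div, Real.inv_rpow h1τ.le, Real.rpow_neg h1τ.le, inv_inv, mul_comm]
  rw [hconstm] at hshiftm
  constructor
  · refine Tendsto.congr' ?_ hshiftp
    filter_upwards [eventually_gt_atTop (0:ℝ)] with y hy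
    have : {ω | 1/τ * y + μ < Y ω} = {ω | y < ident τ μ (Y ω)} := by
      ext ω
      exact (ident_gt_iff hτ0 hτ1 hy).symm
    simp only [hF_def, hg_def]
    rw [this]
  · refine Tendsto.congr' ?_ hshiftm
    filter_upwards [eventually_gt_atTop (0:ℝ)] with y hy
    have : {ω | Y ω < -(1/(1-τ) * y + -μ)} = {ω | ident τ μ (Y ω) < -y} := by
      ext ω
      exact (ident_lt_iff hτ0 hτ1 hy).symm
    simp only [hG_def, hg_def]
    rw [this]
end

section
/- If y^α P(Y > y) → c⁺ and y^α P(Y < −y) → c⁻ as y → ∞, with 1 < α < 2, then y^α P(I_τ(μ_τ,Y) > y) → τ^α c⁺ and y^α P(I_τ(μ_τ,Y) < −y) → (1−τ)^α c⁻ as y → ∞. -/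
open MeasureTheory Filter Set Asymptotics

private lemma aux_tail (α b d c : ℝ) (hb : 0 < b) (f : ℝ → ℝ)
    (hf : Tendsto (fun y => y ^ α * f y) atTop (nhds c)) :
    Tendsto (fun y => y ^ α * f (y / b + d)) atTop (nhds (b ^ α * c)) := by
  have hg : Tendsto (fun y : ℝ => y / b + d) atTop atTop :=
    tendsto_atTop_add_const_right _ d (tendsto_id.atTop_div_const hb)
  have h1 : Tendsto (fun y => (y / b + d) ^ α * f (y / b + d)) atTop (nhds c) := hf.comp hg
  have h2 : Tendsto (fun y : ℝ => y / (y / b + d)) atTop (nhds b) := by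
    have hbase : Tendsto (fun y : ℝ => (1 / b + d / y)⁻¹) atTop (nhds b) := by
      have h0 : Tendsto (fun y : ℝ => 1 / b + d / y) atTop (nhds (1 / b + 0)) :=
        Tendsto.add tendsto_const_nhds (tendsto_const_nhds.div_atTop tendsto_id)
      rw [add_zero] at h0
      simpa using h0.inv₀ (by positivity)
    apply hbase.congr'
    filter_upwards [eventually_gt_atTop (0 : ℝ)] with y hy
    rw [← inv_div]
    congr 1
    field_simp
  have h3 : Tendsto (fun y : ℝ => (y / (y / b + d)) ^ α) atTop (nhds (b ^ α)) :=
    h2.rpow_const (Or.inl hb.ne')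
  have h4 := h3.mul h1
  apply h4.congr'
  have hgpos : ∀ᶠ y : ℝ in atTop, 0 < y / b + d := hg.eventually_gt_atTop 0
  filter_upwards [eventually_gt_atTop (0 : ℝ), hgpos] with y hy hgy
  have hne : (y / b + d) ^ α ≠ 0 := (Real.rpow_pos_of_pos hgy α).ne'
  rw [Real.div_rpow hy.le hgy.le, mul_comm ((y / b + d) ^ α) (f (y / b + d)),
    div_mul_eq_mul_div, mul_div_assoc, mul_div_cancel_right₀ _ hne]

theorem ident_tails_normal_attraction
    {Ω : Type*} [MeasurableSpace Ω] (P : Measure Ω) [IsProbabilityMeasure P]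
    (Y : Ω → ℝ) (hY : Integrable Y P)
    (τ : ℝ) (hτ : τ ∈ Set.Ioo (0:ℝ) 1)
    (μ : ℝ) (hμ : ∫ ω, ident τ μ (Y ω) ∂P = 0)
    (α : ℝ) (hα : α ∈ Set.Ioo (1:ℝ) 2) (cp cm : ℝ)
    (htailp : Tendsto (fun y => y ^ α * (P {ω | y < Y ω}).toReal) atTop (nhds cp))
    (htailm : Tendsto (fun y => y ^ α * (P {ω | Y ω < -y}).toReal) atTop (nhds cm)) :
    Tendsto (fun y => y ^ α * (P {ω | y < ident τ μ (Y ω)}).toReal)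
      atTop (nhds (τ ^ α * cp)) ∧
    Tendsto (fun y => y ^ α * (P {ω | ident τ μ (Y ω) < -y}).toReal)
      atTop (nhds ((1 - τ) ^ α * cm)) := by
  obtain ⟨hτ0, hτ1⟩ := hτ
  have hτ1' : 0 < 1 - τ := by linarith
  constructor
  · have := aux_tail α τ μ cp hτ0 (fun t => (P {ω | t < Y ω}).toReal) htailp
    apply this.congr'
    filter_upwards [eventually_gt_atTop (0 : ℝ)] with y hy
    have hset : {ω | y < ident τ μ (Y ω)} = {ω | y / τ + μ < Y ω} := by
      ext ω
      simp only [ident, Set.mem_setOf_eq]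
      rcases le_or_gt μ (Y ω) with h | h
      · rw [if_pos h, mul_comm, ← div_lt_iff₀ hτ0]
        constructor <;> intro <;> linarith
      · rw [if_neg (not_le.mpr h)]
        have hd : 0 < y / τ := div_pos hy hτ0
        constructor <;> intro h' <;> exfalso <;> nlinarith
    rw [hset]
  · have := aux_tail α (1 - τ) (-μ) cm hτ1' (fun t => (P {ω | Y ω < -t}).toReal) htailm
    apply this.congr'
    filter_upwards [eventually_gt_atTop (0 : ℝ)] with y hy
    have hset : {ω | ident τ μ (Y ω) < -y} = {ω | Y ω < -(y / (1 - τ) + -μ)} := by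
      ext ω
      simp only [ident, Set.mem_setOf_eq]
      rcases le_or_gt μ (Y ω) with h | h
      · rw [if_pos h]
        have : 0 ≤ τ * (Y ω - μ) := by nlinarith
        have hd : 0 < y / (1 - τ) := div_pos hy hτ1'
        constructor <;> intro h' <;> exfalso <;> nlinarith
      · rw [if_neg (not_le.mpr h)]
        rw [neg_lt, neg_neg, mul_comm, ← div_lt_iff₀ hτ1']
        constructor <;> intro <;> linarith
    rw [hset]
end
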